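/- Let u, u', c, c' ∈ ℂ² with cᴴ·u ≠ 0, and let E := the 2×2 matrix with rows (0, −1) and (1, 0) (the symplectic matrix). Then there exists a unique K ∈ M₂(ℂ) such that K·u = u' and K·(E·conj(c)) = E·conj(c'); moreover this K satisfies adj(Kᴴ)·c = c', and conversely K is the unique matrix satisfying K·u = u' and adj(Kᴴ)·c = c'. (In spinor terms: given ψ = (u,χ), ψ' = (u',χ') in W with ⟨χ̄,u⟩ ≠ 0, there is a unique automorphism K of U with K u = u' and K χ̄^# = χ̄'^#, and it satisfies χ' = K‡ χ.) -/
import Mathlib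


open Matrix

/-- The space of 2×2 complex matrices. -/
abbrev M2 : Type := Matrix (Fin 2) (Fin 2) ℂ

/-- The symplectic matrix `E` with rows `(0, −1)` and `(1, 0)`. -/
def symplE : M2 := !![0, -1; 1, 0]

/-- Given 4-spinors `ψ = (u,χ)` and `ψ' = (u',χ')` (with `χ, χ'` encoded by the
component vectors `c, c'`) such that `⟨χ̄,u⟩ = cᴴ·u ≠ 0`, there is a unique
`K ∈ M₂(ℂ)` with `K·u = u'` and `K·(E·c̄) = E·c̄'` (i.e. `K u = u'`,
`K χ̄^# = χ̄'^#`); moreover this `K` satisfies `adj(Kᴴ)·c = c'` (i.e. `χ' = K‡ χ`),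
and conversely `K` is the unique matrix with `K·u = u'` and `adj(Kᴴ)·c = c'`. -/
theorem spinor_pair_transition (u u' c c' : Fin 2 → ℂ) (h : star c ⬝ᵥ u ≠ 0) :
    (∃! K : M2, K *ᵥ u = u' ∧ K *ᵥ (symplE *ᵥ star c) = symplE *ᵥ star c') ∧
    ∀ K : M2,
      (K *ᵥ u = u' ∧ K *ᵥ (symplE *ᵥ star c) = symplE *ᵥ star c')
        ↔ (K *ᵥ u = u' ∧ (Kᴴ).adjugate *ᵥ c = c') := by
  set v : Fin 2 → ℂ := symplE *ᵥ star c with hv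
  set v' : Fin 2 → ℂ := symplE *ᵥ star c' with hv'
  have hv0 : v 0 = -star (c 1) := by simp [hv, symplE, Matrix.mulVec, dotProduct, Fin.sum_univ_two]
  have hv1 : v 1 = star (c 0) := by simp [hv, symplE, Matrix.mulVec, dotProduct, Fin.sum_univ_two]
  have hv0' : v' 0 = -star (c' 1) := by simp [hv', symplE, Matrix.mulVec, dotProduct, Fin.sum_univ_two]
  have hv1' : v' 1 = star (c' 0) := by simp [hv', symplE, Matrix.mulVec, dotProduct, Fin.sum_univ_two]
  -- the key equivalence `K v = v' ↔ adj(Kᴴ) c = c'`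
  have key : ∀ K : M2, K *ᵥ v = v' ↔ (Kᴴ).adjugate *ᵥ c = c' := by
    intro K
    rw [funext_iff, funext_iff]
    simp only [Fin.forall_fin_two]
    rw [Matrix.adjugate_fin_two]
    simp only [Matrix.mulVec, dotProduct, Fin.sum_univ_two, hv0, hv1, hv0', hv1',
      Matrix.conjTranspose_apply, Matrix.cons_val', Matrix.cons_val_zero, Matrix.cons_val_one,
      Matrix.head_cons, Matrix.head_fin_const, Matrix.empty_val', Matrix.cons_val_fin_one,
      Matrix.of_apply]
    constructor
    · rintro ⟨h1, h2⟩
      have h1' := congrArg star h1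
      have h2' := congrArg star h2
      simp only [star_add, star_mul', star_neg, star_star] at h1' h2'
      constructor
      · linear_combination h2'
      · linear_combination -h1'
    · rintro ⟨h1, h2⟩
      have h1' := congrArg star h1
      have h2' := congrArg star h2
      simp only [star_add, star_mul', star_neg, star_star] at h1' h2'
      constructor
      · linear_combination -h2'
      · linear_combination h1'
  refine ⟨?_, fun K => and_congr_right fun _ => key K⟩
  -- existence and uniqueness
  set B : M2 := !![u 0, v 0; u 1, v 1] with hB
  set B' : M2 := !![u' 0, v' 0; u' 1, v' 1] with hB'
  have hdet : B.det = star c ⬝ᵥ u := by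
    simp [hB, Matrix.det_fin_two, hv0, hv1, dotProduct, Fin.sum_univ_two]
    ring
  have hBu : IsUnit B.det := by rw [hdet]; exact isUnit_iff_ne_zero.mpr h
  have hmul : ∀ K : M2, K *ᵥ u = u' ∧ K *ᵥ v = v' ↔ K * B = B' := by
    intro K
    constructor
    · rintro ⟨h1, h2⟩
      have h1' : ∀ x, K x 0 * u 0 + K x 1 * u 1 = u' x := by
        intro x
        rw [← h1]
        simp [Matrix.mulVec, dotProduct, Fin.sum_univ_two]
      have h2' : ∀ x, K x 0 * v 0 + K x 1 * v 1 = v' x := by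
        intro x
        rw [← h2]
        simp [Matrix.mulVec, dotProduct, Fin.sum_univ_two]
      funext i j
      fin_cases i <;> fin_cases j <;>
        simp only [hB, hB', Matrix.mul_apply, Fin.sum_univ_two, Matrix.cons_val', Matrix.cons_val_zero,
          Matrix.cons_val_one, Matrix.head_cons, Matrix.empty_val', Matrix.cons_val_fin_one,
          Matrix.of_apply, Matrix.head_fin_const] <;>
        first
        | exact h1' _
        | exact h2' _
    · intro hKB
      constructor
      · funext i
        have := congrFun (congrFun hKB i) 0
        fin_cases i <;>
          simpa [hB, hB', Matrix.mul_apply, Fin.sum_univ_two, Matrix.mulVec, dotProduct]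
            using this
      · funext i
        have := congrFun (congrFun hKB i) 1
        fin_cases i <;>
          simpa [hB, hB', Matrix.mul_apply, Fin.sum_univ_two, Matrix.mulVec, dotProduct]
            using this
  refine ⟨B' * B⁻¹, (hmul _).mpr ?_, fun K hK => ?_⟩
  · rw [Matrix.mul_assoc, Matrix.nonsing_inv_mul B hBu, Matrix.mul_one]
  · have hKB := (hmul K).mp hK
    calc K = K * B * B⁻¹ := by
            rw [Matrix.mul_assoc, Matrix.mul_nonsing_inv B hBu, Matrix.mul_one]
      _ = B' * B⁻¹ := by rw [hKB]
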